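/- Soft-thresholding representation under an orthonormal design: assume X^T X = I_p and let β̂^{ols} = X^T y. Then any minimizer β̂ of the LES objective Q satisfies, for every k and j, β̂_{kj} = sign(β̂^{ols}_{kj}) · ( |β̂^{ols}_{kj}| − nλα w_k · exp(α|β̂_{kj}|) / Σ_{l=1}^{p_k} exp(α|β̂_{kl}|) )_+, where (a)_+ = max{0, a}. -/

import Mathlib

open Set Filter

lemma hasDeriv_aux (ν lam w S b a s : ℝ) (hD : S + Real.exp (a*s) ≠ 0) :
    HasDerivAt (fun u : ℝ => 1/(2*ν) * (u^2 - 2*b*u) + lam * (w * Real.log (S + Real.exp (a*u))))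
      (1/(2*ν) * (2*s - 2*b) + lam * (w * (a * Real.exp (a*s) / (S + Real.exp (a*s))))) s := by
  have hp : HasDerivAt (fun u : ℝ => u^2) (2*s) s := by simpa using hasDerivAt_pow 2 s
  have hl : HasDerivAt (fun u : ℝ => 2*b*u) (2*b) s := by
    simpa using (hasDerivAt_id s).const_mul (2*b)
  have h1 : HasDerivAt (fun u : ℝ => u^2 - 2*b*u) (2*s - 2*b) s := hp.sub hl
  have hlin : HasDerivAt (fun u : ℝ => a*u) a s := by simpa using (hasDerivAt_id s).const_mul a
  have h2 : HasDerivAt (fun u : ℝ => S + Real.exp (a*u)) (a * Real.exp (a*s)) s := by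
    simpa [mul_comm] using (hlin.exp.const_add S)
  have h3 := h2.log hD
  exact (h1.const_mul (1/(2*ν))).add ((h3.const_mul w).const_mul lam)

lemma mem_cone_of_nhds {s : Set ℝ} {x : ℝ} (h : s ∈ nhds x) (y : ℝ) :
    y ∈ posTangentConeAt s x := by
  apply mem_posTangentConeAt_of_frequently_mem
  apply Filter.Eventually.frequently
  have hcont : ContinuousAt (fun r : ℝ => x + r • y) 0 := by fun_prop
  have h0 : (fun r : ℝ => x + r • y) 0 = x := by simp
  have h2 : ∀ᶠ r in nhds (0:ℝ), x + r • y ∈ s := hcont (by rw [h0]; exact h)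
  exact h2.filter_mono nhdsWithin_le_nhds

lemma cone_one {t : ℝ} (ht : 0 ≤ t) : (1:ℝ) ∈ posTangentConeAt (Set.Ici (0:ℝ)) t := by
  apply mem_posTangentConeAt_of_segment_subset
  rw [segment_eq_Icc (by linarith : t ≤ t + 1)]
  exact fun u hu => le_trans ht hu.1

lemma cone_negone {t : ℝ} (ht : t ≤ 0) : (-1:ℝ) ∈ posTangentConeAt (Set.Iic (0:ℝ)) t := by
  apply mem_posTangentConeAt_of_segment_subset
  rw [segment_symm, show t + (-1) = t - 1 by ring, segment_eq_Icc (by linarith : t - 1 ≤ t)]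
  exact fun u hu => le_trans hu.2 ht

lemma one_dim (ν lam α w S b t : ℝ) (hν : 0 < ν) (hlam : 0 < lam) (hα : 0 < α)
    (hw : 0 ≤ w) (hS : 0 ≤ S)
    (hmin : ∀ s : ℝ,
      1/(2*ν) * (t^2 - 2*b*t) + lam * (w * Real.log (S + Real.exp (α*|t|)))
      ≤ 1/(2*ν) * (s^2 - 2*b*s) + lam * (w * Real.log (S + Real.exp (α*|s|)))) :
    t = Real.sign b *
      max 0 (|b| - ν*lam*α*w * (Real.exp (α*|t|) / (S + Real.exp (α*|t|)))) := by
  have hDpos : ∀ u : ℝ, 0 < S + Real.exp u := fun u =>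
    add_pos_of_nonneg_of_pos hS (Real.exp_pos u)
  have hνlamαw : 0 ≤ ν*lam*α*w :=
    mul_nonneg (mul_nonneg (mul_nonneg hν.le hlam.le) hα.le) hw
  set c := ν*lam*α*w * (Real.exp (α*|t|) / (S + Real.exp (α*|t|))) with hc_def
  have hc : 0 ≤ c :=
    mul_nonneg hνlamαw (div_nonneg (Real.exp_pos _).le (hDpos _).le)
  rcases lt_trichotomy t 0 with htn | ht0 | htp
  · -- t < 0 : use a = -α
    have hd := hasDeriv_aux ν lam w S b (-α) t (hDpos _).ne'
    have hloc : IsLocalMin (fun u : ℝ =>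
        1/(2*ν) * (u^2 - 2*b*u) + lam * (w * Real.log (S + Real.exp (-α*u)))) t := by
      filter_upwards [Iio_mem_nhds htn] with u hu
      have h1 := hmin u
      rw [abs_of_neg htn, abs_of_neg hu] at h1
      simpa [neg_mul, mul_neg] using h1
    have hzero := hloc.hasDerivAt_eq_zero hd
    have habs : α * |t| = -α * t := by rw [abs_of_neg htn]; ring
    have hkey : t - b - c = 0 := by
      have h2 : t - b - c = ν * (1/(2*ν) * (2*t - 2*b) +
          lam * (w * (-α * Real.exp (-α*t) / (S + Real.exp (-α*t))))) := by
        rw [hc_def, habs]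
        field_simp
        ring
      rw [h2, hzero, mul_zero]
    have hb : b = t - c := by linarith
    have hbneg : b < 0 := by linarith
    rw [Real.sign_of_neg hbneg, abs_of_neg hbneg, hb,
        max_eq_right (by linarith : (0:ℝ) ≤ -(t-c) - c)]
    ring
  · -- t = 0
    subst ht0
    have habs0 : α * |(0:ℝ)| = 0 := by simp
    -- right side : a = α on Ici 0
    have hdR := hasDeriv_aux ν lam w S b α 0 (hDpos _).ne'
    have hlocR : IsLocalMinOn (fun u : ℝ =>
        1/(2*ν) * (u^2 - 2*b*u) + lam * (w * Real.log (S + Real.exp (α*u)))) (Set.Ici 0) 0 := by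
      apply eventually_nhdsWithin_of_forall
      intro u hu
      have h1 := hmin u
      rw [habs0, abs_of_nonneg (hu : (0:ℝ) ≤ u)] at h1
      simpa using h1
    have hR := hlocR.hasFDerivWithinAt_nonneg (hdR.hasDerivWithinAt.hasFDerivWithinAt)
      (cone_one le_rfl)
    simp only [ContinuousLinearMap.toSpanSingleton_apply,
      smul_eq_mul, one_mul] at hR
    -- left side : a = -α on Iic 0
    have hdL := hasDeriv_aux ν lam w S b (-α) 0 (hDpos _).ne'
    have hlocL : IsLocalMinOn (fun u : ℝ =>
        1/(2*ν) * (u^2 - 2*b*u) + lam * (w * Real.log (S + Real.exp (-α*u)))) (Set.Iic 0) 0 := by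
      apply eventually_nhdsWithin_of_forall
      intro u hu
      have h1 := hmin u
      rw [habs0, abs_of_nonpos (hu : u ≤ (0:ℝ))] at h1
      simpa [neg_mul, mul_neg] using h1
    have hL := hlocL.hasFDerivWithinAt_nonneg (hdL.hasDerivWithinAt.hasFDerivWithinAt)
      (cone_negone le_rfl)
    simp only [ContinuousLinearMap.toSpanSingleton_apply,
      smul_eq_mul, neg_one_mul] at hL
    -- conclude |b| ≤ c
    have hSe : (0:ℝ) < S + Real.exp (α * |(0:ℝ)|) := hDpos _
    have hSp : (0:ℝ) < S + 1 := by linarith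
    norm_num at hR hL
    have hc' : c = ν * lam * α * w * (1/(S+1)) := by rw [hc_def]; norm_num
    have e1 : ν * (ν⁻¹ * (1/2) * (2*b)) = b := by field_simp
    have e2 : ν * (lam * (w * (α/(S+1)))) = c := by rw [hc', div_eq_mul_inv, div_eq_mul_inv]; ring
    have e3 : ν * (lam * (w * (-α/(S+1)))) = -c := by rw [hc', div_eq_mul_inv, div_eq_mul_inv]; ring
    have hb1 : b ≤ c := by
      have := mul_le_mul_of_nonneg_left hR hν.le
      rw [e1, e2] at this; exact this
    have hb2 : -c ≤ b := by
      have := mul_le_mul_of_nonneg_left hL hν.le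
      rw [e1, e3] at this; exact this
    have hble : |b| ≤ c := abs_le.mpr ⟨hb2, hb1⟩
    rw [max_eq_left (by linarith [abs_nonneg b] : |b| - c ≤ 0)]
    simp
  · -- t > 0 : a = α
    have hd := hasDeriv_aux ν lam w S b α t (hDpos _).ne'
    have hloc : IsLocalMin (fun u : ℝ =>
        1/(2*ν) * (u^2 - 2*b*u) + lam * (w * Real.log (S + Real.exp (α*u)))) t := by
      filter_upwards [Ioi_mem_nhds htp] with u hu
      have h1 := hmin u
      rw [abs_of_pos htp, abs_of_pos (hu : (0:ℝ) < u)] at h1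
      exact h1
    have hzero := hloc.hasDerivAt_eq_zero hd
    have habs : α * |t| = α * t := by rw [abs_of_pos htp]
    have hkey : t - b + c = 0 := by
      have h2 : t - b + c = ν * (1/(2*ν) * (2*t - 2*b) +
          lam * (w * (α * Real.exp (α*t) / (S + Real.exp (α*t))))) := by
        rw [hc_def, habs]
        field_simp
      rw [h2, hzero, mul_zero]
    have hb : b = t + c := by linarith
    have hbpos : 0 < b := by linarith
    rw [Real.sign_of_pos hbpos, abs_of_pos hbpos, hb,
        max_eq_right (by linarith : (0:ℝ) ≤ t + c - c)]
    ring


/-- **Soft-thresholding representation under an orthonormal design.**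
Assume `XᵀX = I` and let `β̂ᵒˡˢ = Xᵀ y`.  Then any minimizer `β̂` of the LES
objective `Q` satisfies, for every `k` and `j`,
`β̂ kj = sign (β̂ᵒˡˢ kj) * ( |β̂ᵒˡˢ kj| - n λ α w k * exp (α |β̂ kj|) / ∑ l, exp (α |β̂ kl|) )₊`. -/
theorem les_soft_threshold (n K : ℕ) (hn : 0 < n) (hK : 0 < K)
    (p : Fin K → ℕ) (hp : ∀ k, 1 ≤ p k)
    (X : Fin n → (Σ k : Fin K, Fin (p k)) → ℝ) (y : Fin n → ℝ)
    (horth : ∀ j j' : Σ k : Fin K, Fin (p k),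
      ∑ i : Fin n, X i j * X i j' = if j = j' then 1 else 0)
    (βols : (Σ k : Fin K, Fin (p k)) → ℝ)
    (hols : ∀ j : Σ k : Fin K, Fin (p k), βols j = ∑ i : Fin n, X i j * y i)
    (lam α : ℝ) (hlam : 0 < lam) (hα : 0 < α)
    (w : Fin K → ℝ) (hw : ∀ k, 0 ≤ w k)
    (βh : (Σ k : Fin K, Fin (p k)) → ℝ)
    (hmin : IsMinOn
      (fun β : (Σ k : Fin K, Fin (p k)) → ℝ =>
        (1 / (2 * (n : ℝ))) * ∑ i : Fin n, (y i - ∑ j' : Σ k : Fin K, Fin (p k), X i j' * β j') ^ 2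
          + lam * ∑ l : Fin K, w l * Real.log (∑ j' : Fin (p l), Real.exp (α * |β ⟨l, j'⟩|)))
      Set.univ βh)
    (k : Fin K) (j : Fin (p k)) :
    βh ⟨k, j⟩ = Real.sign (βols ⟨k, j⟩) *
      max 0 (|βols ⟨k, j⟩| - (n : ℝ) * lam * α * w k *
        (Real.exp (α * |βh ⟨k, j⟩|) / ∑ l : Fin (p k), Real.exp (α * |βh ⟨k, l⟩|))) := by
  classical
  have hnR : (0:ℝ) < (n:ℝ) := by exact_mod_cast hn
  set j₀ : (Σ k : Fin K, Fin (p k)) := ⟨k, j⟩ with hj₀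
  -- quadratic expansion of the residual sum of squares
  have key : ∀ β : (Σ k : Fin K, Fin (p k)) → ℝ,
      ∑ i : Fin n, (y i - ∑ j' : Σ k : Fin K, Fin (p k), X i j' * β j') ^ 2
      = (∑ i : Fin n, (y i)^2) - 2 * (∑ j' : Σ k : Fin K, Fin (p k), βols j' * β j')
        + ∑ j' : Σ k : Fin K, Fin (p k), (β j')^2 := by
    intro β
    have cross : ∑ i : Fin n, y i * ∑ j' : Σ k : Fin K, Fin (p k), X i j' * β j'
        = ∑ j' : Σ k : Fin K, Fin (p k), βols j' * β j' := by
      simp_rw [Finset.mul_sum]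
      rw [Finset.sum_comm]
      refine Finset.sum_congr rfl fun j' _ => ?_
      rw [hols j', Finset.sum_mul]
      exact Finset.sum_congr rfl fun i _ => by ring
    have sqr : ∑ i : Fin n, (∑ j' : Σ k : Fin K, Fin (p k), X i j' * β j')^2
        = ∑ j' : Σ k : Fin K, Fin (p k), (β j')^2 := by
      have e1 : ∀ i : Fin n, (∑ j' : Σ k : Fin K, Fin (p k), X i j' * β j')^2
          = ∑ j₁ : Σ k : Fin K, Fin (p k), ∑ j₂ : Σ k : Fin K, Fin (p k),
              (X i j₁ * β j₁) * (X i j₂ * β j₂) := fun i => by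
        rw [pow_two, Finset.sum_mul_sum]
      rw [Finset.sum_congr rfl fun i _ => e1 i, Finset.sum_comm]
      have e2 : ∀ j₁ : Σ k : Fin K, Fin (p k),
          ∑ i : Fin n, ∑ j₂ : Σ k : Fin K, Fin (p k), (X i j₁ * β j₁) * (X i j₂ * β j₂)
          = ∑ j₂ : Σ k : Fin K, Fin (p k), ∑ i : Fin n, (X i j₁ * β j₁) * (X i j₂ * β j₂) :=
        fun j₁ => Finset.sum_comm
      rw [Finset.sum_congr rfl fun j₁ _ => e2 j₁]
      have e3 : ∀ j₁ j₂ : Σ k : Fin K, Fin (p k),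
          ∑ i : Fin n, (X i j₁ * β j₁) * (X i j₂ * β j₂)
          = (if j₁ = j₂ then (1:ℝ) else 0) * (β j₁ * β j₂) := by
        intro j₁ j₂
        rw [← horth j₁ j₂, Finset.sum_mul]
        exact Finset.sum_congr rfl fun i _ => by ring
      rw [Finset.sum_congr rfl fun j₁ _ => Finset.sum_congr rfl fun j₂ _ => e3 j₁ j₂]
      simp only [ite_mul, one_mul, zero_mul, Finset.sum_ite_eq, Finset.mem_univ, if_true]
      exact Finset.sum_congr rfl fun j₁ _ => by ring
    have expand : ∀ i : Fin n,
        (y i - ∑ j' : Σ k : Fin K, Fin (p k), X i j' * β j')^2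
        = (y i)^2 - 2*(y i * ∑ j' : Σ k : Fin K, Fin (p k), X i j' * β j')
          + (∑ j' : Σ k : Fin K, Fin (p k), X i j' * β j')^2 := fun i => by ring
    rw [Finset.sum_congr rfl fun i _ => expand i, Finset.sum_add_distrib,
      Finset.sum_sub_distrib, ← Finset.mul_sum, cross, sqr]
  -- abbreviations
  set b := βols j₀ with hbdef
  set S := ∑ j' ∈ Finset.univ.erase j, Real.exp (α * |βh ⟨k, j'⟩|) with hSdef
  have hS : 0 ≤ S := Finset.sum_nonneg fun _ _ => (Real.exp_pos _).le
  have update_k : ∀ (t : ℝ) (j' : Fin (p k)), j' ≠ j →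
      Function.update βh j₀ t ⟨k, j'⟩ = βh ⟨k, j'⟩ := by
    intro t j' hj'
    apply Function.update_of_ne
    rw [hj₀]
    intro h
    exact hj' (eq_of_heq (Sigma.mk.inj_iff.mp h).2)
  have update_ne_k : ∀ (t : ℝ) (l : Fin K) (j' : Fin (p l)), l ≠ k →
      Function.update βh j₀ t ⟨l, j'⟩ = βh ⟨l, j'⟩ := by
    intro t l j' hl
    apply Function.update_of_ne
    rw [hj₀]
    intro h
    exact hl (congrArg Sigma.fst h)
  have hsplitk : ∀ t : ℝ,
      (∑ j' : Fin (p k), Real.exp (α * |Function.update βh j₀ t ⟨k, j'⟩|))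
      = S + Real.exp (α * |t|) := by
    intro t
    rw [← Finset.sum_erase_add _ _ (Finset.mem_univ j)]
    congr 1
    · exact Finset.sum_congr rfl fun j' hj' => by
        rw [update_k t j' (Finset.ne_of_mem_erase hj')]
    · rw [show (⟨k, j⟩ : Σ k : Fin K, Fin (p k)) = j₀ from hj₀.symm, Function.update_self]
  have hsplit1 : ∀ t : ℝ,
      (∑ j' : Σ k : Fin K, Fin (p k), βols j' * Function.update βh j₀ t j')
      = (∑ j' ∈ Finset.univ.erase j₀, βols j' * βh j') + b * t := by
    intro t
    rw [← Finset.sum_erase_add _ _ (Finset.mem_univ j₀)]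
    congr 1
    · exact Finset.sum_congr rfl fun j' hj' => by
        rw [Function.update_of_ne (Finset.ne_of_mem_erase hj')]
    · rw [Function.update_self]
  have hsplit2 : ∀ t : ℝ,
      (∑ j' : Σ k : Fin K, Fin (p k), (Function.update βh j₀ t j')^2)
      = (∑ j' ∈ Finset.univ.erase j₀, (βh j')^2) + t^2 := by
    intro t
    rw [← Finset.sum_erase_add _ _ (Finset.mem_univ j₀)]
    congr 1
    · exact Finset.sum_congr rfl fun j' hj' => by
        rw [Function.update_of_ne (Finset.ne_of_mem_erase hj')]
    · rw [Function.update_self]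
  have hsplitK : ∀ t : ℝ,
      (∑ l : Fin K, w l * Real.log (∑ j' : Fin (p l),
          Real.exp (α * |Function.update βh j₀ t ⟨l, j'⟩|)))
      = (∑ l ∈ Finset.univ.erase k, w l * Real.log (∑ j' : Fin (p l),
          Real.exp (α * |βh ⟨l, j'⟩|)))
        + w k * Real.log (S + Real.exp (α * |t|)) := by
    intro t
    rw [← Finset.sum_erase_add _ _ (Finset.mem_univ k)]
    congr 1
    · refine Finset.sum_congr rfl fun l hl => ?_
      have h2 : (∑ j' : Fin (p l), Real.exp (α * |Function.update βh j₀ t ⟨l, j'⟩|))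
          = ∑ j' : Fin (p l), Real.exp (α * |βh ⟨l, j'⟩|) :=
        Finset.sum_congr rfl fun j' _ => by
          rw [update_ne_k t l j' (Finset.ne_of_mem_erase hl)]
      rw [h2]
    · rw [hsplitk t]
  -- the objective along the coordinate j₀
  have formQ : ∀ t : ℝ,
      (1 / (2 * (n : ℝ))) * ∑ i : Fin n, (y i - ∑ j' : Σ k : Fin K, Fin (p k),
          X i j' * Function.update βh j₀ t j') ^ 2
        + lam * ∑ l : Fin K, w l * Real.log (∑ j' : Fin (p l),
            Real.exp (α * |Function.update βh j₀ t ⟨l, j'⟩|))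
      = ((1/(2*(n:ℝ))) * ((∑ i : Fin n, (y i)^2)
            - 2*(∑ j' ∈ Finset.univ.erase j₀, βols j' * βh j')
            + (∑ j' ∈ Finset.univ.erase j₀, (βh j')^2))
          + lam * (∑ l ∈ Finset.univ.erase k, w l * Real.log (∑ j' : Fin (p l),
              Real.exp (α * |βh ⟨l, j'⟩|))))
        + (1/(2*(n:ℝ)) * (t^2 - 2*b*t)
            + lam * (w k * Real.log (S + Real.exp (α*|t|)))) := by
    intro t
    rw [key, hsplit1 t, hsplit2 t, hsplitK t]
    ring
  -- one-dimensional minimality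
  have h1d : ∀ s : ℝ,
      1/(2*(n:ℝ)) * ((βh j₀)^2 - 2*b*(βh j₀))
        + lam * (w k * Real.log (S + Real.exp (α*|βh j₀|)))
      ≤ 1/(2*(n:ℝ)) * (s^2 - 2*b*s)
        + lam * (w k * Real.log (S + Real.exp (α*|s|))) := by
    intro s
    have h := isMinOn_iff.mp hmin (Function.update βh j₀ s) (Set.mem_univ _)
    have hL := formQ (βh j₀)
    rw [Function.update_eq_self] at hL
    have hR := formQ s
    rw [hL, hR] at h
    linarith
  have hconc := one_dim (n:ℝ) lam α (w k) S b (βh j₀) hnR hlam hα (hw k) hS h1d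
  have hsum : (∑ l : Fin (p k), Real.exp (α * |βh ⟨k, l⟩|))
      = S + Real.exp (α * |βh j₀|) := by
    rw [hSdef, show j₀ = (⟨k, j⟩ : Σ k : Fin K, Fin (p k)) from hj₀]
    exact (Finset.sum_erase_add _ _ (Finset.mem_univ j)).symm
  rw [hsum]
  exact hconc
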